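/- arXiv:2402.15947 — 2 statements merged into one kernel-verified Lean document; each statement's English description precedes it below -/
import Mathlib

section
/- Let p be a prime, A ⊆ ℚ, and let ⟨A/ℤ⟩ be the subgroup of ℚ/ℤ generated by the image of A. If the group Hom(⟨A/ℤ⟩, 𝔽̄_p^×) is finite of cardinality N, then A ⊆ (1/N)·ℤ[1/p]. -/
lemma units_zpow_surj (K : Type*) [Field K] [IsAlgClosed K] (u : Kˣ) {k : ℤ} (hk : k ≠ 0) :
    ∃ w : Kˣ, w ^ k = u := by
  obtain ⟨z, hz⟩ := IsAlgClosed.exists_pow_nat_eq (u : K) (Int.natAbs_pos.mpr hk)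
  have hz0 : z ≠ 0 := by
    rintro rfl
    rw [zero_pow (Int.natAbs_ne_zero.mpr hk)] at hz
    exact u.ne_zero hz.symm
  set w0 := Units.mk0 z hz0 with hw0def
  have hw0 : w0 ^ (k.natAbs) = u := by
    apply Units.ext
    simpa [hw0def] using hz
  rcases Int.natAbs_eq k with h | h
  · exact ⟨w0, by rw [h, zpow_natCast, hw0]⟩
  · exact ⟨w0⁻¹, by rw [h, zpow_neg, inv_zpow, inv_inv, zpow_natCast, hw0]⟩

noncomputable instance divisibleAdditiveUnits (K : Type*) [Field K] [IsAlgClosed K] :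
    DivisibleBy (Additive Kˣ) ℤ where
  div a n := if hn : n = 0 then 0 else Additive.ofMul (units_zpow_surj K a.toMul hn).choose
  div_zero a := by simp
  div_cancel {n} a hn := by
    rw [dif_neg hn]
    have h := (units_zpow_surj K a.toMul hn).choose_spec
    apply Additive.toMul.injective
    simpa using h

/-- `(1/N)·ℤ[1/p]` as a set of rationals. -/
def padicFracSet (p : ℕ) (N : ℕ) : Set ℚ :=
  {q : ℚ | ∃ a v : ℤ, q = (a : ℚ) * (p : ℚ) ^ v / (N : ℚ)}

theorem stmt_4 (p : ℕ) [Fact p.Prime] (A : Set ℚ) (N : ℕ)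
    (hfin : Finite (AddChar (AddSubgroup.closure ((fun q : ℚ => (q : AddCircle (1 : ℚ))) '' A))
      (AlgebraicClosure (ZMod p))ˣ))
    (hN : Nat.card (AddChar (AddSubgroup.closure ((fun q : ℚ => (q : AddCircle (1 : ℚ))) '' A))
      (AlgebraicClosure (ZMod p))ˣ) = N) :
    A ⊆ padicFracSet p N := by
  intro q hq
  haveI hfact : Fact ((0:ℚ) < 1) := ⟨one_pos⟩
  set K := AlgebraicClosure (ZMod p) with hK
  set G := AddSubgroup.closure ((fun q : ℚ => (q : AddCircle (1 : ℚ))) '' A) with hG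
  set x : AddCircle (1:ℚ) := (q : AddCircle (1:ℚ)) with hx
  have hxG : x ∈ G := AddSubgroup.subset_closure ⟨q, hq, rfl⟩
  have hord : addOrderOf x = q.den := by
    have := AddCircle.addOrderOf_coe_rat (p := (1:ℚ)) (q := q)
    simpa [hx] using this
  set m := q.den with hm
  have hm0 : m ≠ 0 := q.den_nz
  set e := m.factorization p with he
  set m' := m / p ^ e with hm'
  have hmsplit : p ^ e * m' = m := Nat.ordProj_mul_ordCompl_eq_self m p
  have hpm' : ¬ p ∣ m' := Nat.not_dvd_ordCompl Fact.out hm0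
  have hm'0 : m' ≠ 0 := by
    intro h
    rw [h, mul_zero] at hmsplit
    exact hm0 hmsplit.symm
  haveI : NeZero ((m' : K)) := ⟨by
    rw [Ne, CharP.cast_eq_zero_iff K p m']; exact hpm'⟩
  obtain ⟨ζ, hζ⟩ := HasEnoughRootsOfUnity.exists_primitiveRoot K m'
  have hζu : IsUnit ζ := hζ.isUnit hm'0
  set u : Kˣ := hζu.unit with hu
  have hordu : orderOf u = m' := by
    rw [← orderOf_units, hζu.unit_spec, ← hζ.eq_orderOf]
  set H := AddSubgroup.zmultiples x with hH
  have hHG : H ≤ G := (AddSubgroup.zmultiples_le).mpr hxG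
  set xH : H := ⟨x, AddSubgroup.mem_zmultiples x⟩ with hxH
  set π : ℤ →+ H := zmultiplesHom H xH with hπdef
  have hπ : Function.Surjective π := by
    rintro ⟨y, hy⟩
    obtain ⟨k, hk⟩ := AddSubgroup.mem_zmultiples_iff.mp hy
    exact ⟨k, Subtype.ext (by simpa [hπdef] using hk)⟩
  set g1 : ℤ →+ Additive Kˣ := zmultiplesHom _ (Additive.ofMul u) with hg1def
  have hker : π.ker ≤ g1.ker := by
    intro k hk
    have hk0 : π k = 0 := hk
    have hkx : k • x = 0 := by
      have := congrArg Subtype.val hk0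
      simpa [hπdef, hxH] using this
    have hmk : ((addOrderOf x : ℕ) : ℤ) ∣ k := addOrderOf_dvd_iff_zsmul_eq_zero.mpr hkx
    rw [hord] at hmk
    have hm'm : m' ∣ m := ⟨p ^ e, by rw [mul_comm]; exact hmsplit.symm⟩
    have huk : u ^ k = 1 := by
      rw [← orderOf_dvd_iff_zpow_eq_one, hordu]
      exact dvd_trans (Int.natCast_dvd_natCast.mpr hm'm) hmk
    show g1 k = 0
    apply Additive.toMul.injective
    simpa [hg1def] using huk
  set e1 : (ℤ ⧸ π.ker) ≃+ H := QuotientAddGroup.quotientKerEquivOfSurjective π hπ with he1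
  set f0 : H →+ Additive Kˣ :=
    (QuotientAddGroup.lift π.ker g1 hker).comp e1.symm.toAddMonoidHom with hf0def
  have hf0 : f0 xH = Additive.ofMul u := by
    have h1 : e1 ((1:ℤ) : ℤ ⧸ π.ker) = xH := by
      show π 1 = xH
      simp [hπdef]
    have h2 : e1.symm xH = ((1:ℤ) : ℤ ⧸ π.ker) := by
      rw [e1.symm_apply_eq]; exact h1.symm
    show (QuotientAddGroup.lift π.ker g1 hker) (e1.symm xH) = Additive.ofMul u
    rw [h2]
    show g1 1 = Additive.ofMul u
    simp [hg1def]
  obtain ⟨ψ, hψ⟩ := Module.Baer.extension_property_addMonoidHom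
    (Module.Baer.of_divisible (Additive Kˣ))
    (AddSubgroup.inclusion hHG) (AddSubgroup.inclusion_injective hHG) f0
  set χ : AddChar G Kˣ := AddChar.toAddMonoidHomEquiv.symm ψ with hχ
  set xG : G := ⟨x, hxG⟩ with hxG'
  have hχx : χ xG = u := by
    have h3 := DFunLike.congr_fun hψ xH
    have h4 : ψ xG = Additive.ofMul u := by
      have : AddSubgroup.inclusion hHG xH = xG := rfl
      rw [← this]
      rw [show ψ (AddSubgroup.inclusion hHG xH) = f0 xH from h3]
      exact hf0
    simp [hχ, h4]
  have hm'χ : m' ∣ orderOf χ := by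
    rw [← hordu, ← hχx]
    apply orderOf_dvd_of_pow_eq_one
    rw [← AddChar.pow_apply, pow_orderOf_eq_one, AddChar.one_apply]
  have hm'N : m' ∣ N := by
    rw [← hN]
    exact dvd_trans hm'χ (orderOf_dvd_natCard χ)
  obtain ⟨c, hc⟩ := hm'N
  have hN0 : N ≠ 0 := by
    rw [← hN]
    exact Nat.card_ne_zero.mpr ⟨⟨1⟩, hfin⟩
  have hc0 : c ≠ 0 := by
    rintro rfl
    rw [mul_zero] at hc
    exact hN0 hc
  refine ⟨q.num * c, -(e : ℤ), ?_⟩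
  have hp0 : (p:ℚ) ≠ 0 := Nat.cast_ne_zero.mpr (Fact.out : p.Prime).pos.ne'
  have key : (q.den : ℚ) = (p:ℚ)^e * (m':ℚ) := by exact_mod_cast hmsplit.symm
  have hq' : q = (q.num : ℚ) / q.den := (Rat.num_div_den q).symm
  have hNQ : (N:ℚ) = (m':ℚ) * (c:ℚ) := by exact_mod_cast congrArg (Nat.cast : ℕ → ℚ) hc
  have hm'Q : (m':ℚ) ≠ 0 := Nat.cast_ne_zero.mpr hm'0
  have hcQ : (c:ℚ) ≠ 0 := Nat.cast_ne_zero.mpr hc0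
  have hpe : (p:ℚ)^e ≠ 0 := pow_ne_zero _ hp0
  rw [zpow_neg, zpow_natCast, hNQ]
  have h5 : ((q.num * c : ℤ) : ℚ) * ((p:ℚ)^e)⁻¹ / ((m':ℚ) * (c:ℚ)) = (q.num : ℚ) / q.den := by
    rw [key]
    push_cast
    field_simp
  rw [h5, Rat.num_div_den]
end

section
/- Let k be a perfect field of characteristic p, G an ordered abelian group containing ℤ, and consider the Hahn series ring W(k)((t^G)) with coefficients in the Witt vectors W(k). Then the set N = { Σ_g r_g t^g : for every g ∈ G, Σ_{n∈ℤ} r_{g+n} p^n = 0 in W(k) } is a maximal ideal of W(k)((t^G)). -/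
noncomputable section PoonenAux

open WittVector Finset

variable (p : ℕ) [Fact p.Prime] (k : Type*) [Field k] [CharP k p] [PerfectRing k p]

local notation "W" => WittVector p k

/-! ### Witt vector digit machinery -/

lemma pn_nonzero : (p : W) ≠ 0 := WittVector.p_nonzero p k

lemma cc_p : WittVector.constantCoeff (p : W) = 0 := by
  simpa [WittVector.constantCoeff_apply] using WittVector.coeff_p_zero (p := p) (R := k)

lemma exists_pdiv (x : W) :
    ∃ y : W, x = WittVector.teichmuller p (WittVector.constantCoeff x) + p * y := by
  set z := x - WittVector.teichmuller p (WittVector.constantCoeff x) with hz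
  have h0 : ∀ i < 1, z.coeff i = 0 := by
    intro i hi
    interval_cases i
    have : WittVector.constantCoeff z = 0 := by
      simp [hz, map_sub, WittVector.constantCoeff_apply, WittVector.teichmuller_coeff_zero]
    simpa [WittVector.constantCoeff_apply] using this
  have h2 := WittVector.eq_iterate_verschiebung h0
  rw [Function.iterate_one] at h2
  refine ⟨(WittVector.frobeniusEquiv p k).symm (z.shift 1), ?_⟩
  have h3 : WittVector.frobenius ((WittVector.frobeniusEquiv p k).symm (z.shift 1))
      = z.shift 1 := (WittVector.frobeniusEquiv p k).apply_symm_apply (z.shift 1)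
  have h4 : (p : W) * ((WittVector.frobeniusEquiv p k).symm (z.shift 1)) = z := by
    rw [mul_comm, ← WittVector.verschiebung_frobenius, h3, ← h2]
  rw [h4, hz]
  ring

/-- division after subtracting the Teichmüller constant term -/
def pdiv (x : W) : W := (exists_pdiv p k x).choose

lemma pdiv_spec (x : W) :
    x = WittVector.teichmuller p (WittVector.constantCoeff x) + p * pdiv p k x :=
  (exists_pdiv p k x).choose_spec

/-- the `n`-th Teichmüller digit of a Witt vector -/
def digit : ℕ → W → k
  | 0, x => WittVector.constantCoeff x
  | n + 1, x => digit n (pdiv p k x)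

lemma pdiv_zero : pdiv p k 0 = 0 := by
  have h := (pdiv_spec p k 0).symm
  rw [map_zero, WittVector.teichmuller_zero, zero_add] at h
  exact (mul_eq_zero.1 h).resolve_left (pn_nonzero p k)

lemma digit_zero (n : ℕ) : digit p k n 0 = 0 := by
  induction n with
  | zero => simp [digit]
  | succ n ih => simp [digit, pdiv_zero, ih]

lemma cc_eq_of_dvd {x y : W} (h : (p : W) ∣ x - y) :
    WittVector.constantCoeff x = WittVector.constantCoeff y := by
  obtain ⟨c, hc⟩ := h
  have : WittVector.constantCoeff x - WittVector.constantCoeff y = 0 := by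
    rw [← map_sub, hc, map_mul, cc_p, zero_mul]
  exact sub_eq_zero.1 this

lemma digit_congr (n : ℕ) {x y : W} (h : (p : W) ^ (n + 1) ∣ x - y) :
    digit p k n x = digit p k n y := by
  induction n generalizing x y with
  | zero =>
    simp only [digit]
    exact cc_eq_of_dvd p k (by simpa using h)
  | succ n ih =>
    have hp1 : (p : W) ∣ x - y :=
      dvd_trans (dvd_pow_self (p : W) (Nat.succ_ne_zero (n + 1))) h
    have hcc := cc_eq_of_dvd p k hp1
    obtain ⟨c, hc⟩ := h
    have key : (p : W) * (pdiv p k x - pdiv p k y) = (p : W) * ((p : W) ^ (n + 1) * c) := by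
      have hx := pdiv_spec p k x
      have hy := pdiv_spec p k y
      have : x - y = (p : W) ^ (n + 1 + 1) * c := hc
      rw [hcc] at hx
      calc (p : W) * (pdiv p k x - pdiv p k y)
          = ((WittVector.teichmuller p (WittVector.constantCoeff y) + p * pdiv p k x)
            - (WittVector.teichmuller p (WittVector.constantCoeff y) + p * pdiv p k y)) := by
            ring
        _ = x - y := by rw [← hx, ← hy]
        _ = (p : W) * ((p : W) ^ (n + 1) * c) := by rw [this]; ring
    have hdvd : (p : W) ^ (n + 1) ∣ pdiv p k x - pdiv p k y :=
      ⟨c, mul_left_cancel₀ (pn_nonzero p k) key⟩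
    simpa [digit] using ih hdvd

lemma pdiv_p_mul (x : W) : pdiv p k ((p : W) * x) = x := by
  have h := (pdiv_spec p k ((p : W) * x)).symm
  have hcc : WittVector.constantCoeff ((p : W) * x) = 0 := by
    rw [map_mul, cc_p, zero_mul]
  rw [hcc, WittVector.teichmuller_zero, zero_add] at h
  exact (mul_left_cancel₀ (pn_nonzero p k) h)

lemma digit_p_mul (n : ℕ) (x : W) : digit p k (n + 1) ((p : W) * x) = digit p k n x := by
  simp [digit, pdiv_p_mul]

lemma digit_expansion (n : ℕ) (x : W) :
    (p : W) ^ (n + 1) ∣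
      x - ∑ i ∈ Finset.range (n + 1), WittVector.teichmuller p (digit p k i x) * (p : W) ^ i := by
  induction n generalizing x with
  | zero =>
    rw [pow_one]
    refine ⟨pdiv p k x, ?_⟩
    rw [Finset.sum_range_one, pow_zero, mul_one,
      show digit p k 0 x = WittVector.constantCoeff x from rfl]
    linear_combination pdiv_spec p k x
  | succ n ih =>
    obtain ⟨c, hc⟩ := ih (pdiv p k x)
    refine ⟨c, ?_⟩
    have hd : ∀ i ∈ Finset.range (n + 1),
        WittVector.teichmuller p (digit p k (i + 1) x) * (p : W) ^ (i + 1)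
          = (p : W) * (WittVector.teichmuller p (digit p k i (pdiv p k x)) * (p : W) ^ i) := by
      intro i _
      rw [show digit p k (i + 1) x = digit p k i (pdiv p k x) from rfl]
      ring
    rw [Finset.sum_range_succ', Finset.sum_congr rfl hd, ← Finset.mul_sum, pow_zero, mul_one,
      show digit p k 0 x = WittVector.constantCoeff x from rfl]
    linear_combination pdiv_spec p k x + (p : W) * hc

end PoonenAux

noncomputable section PoonenMain

open WittVector Finset Pointwise

variable (p : ℕ) [Fact p.Prime] (k : Type*) [Field k] [CharP k p] [PerfectRing k p]
variable (G : Type*) [AddCommGroup G] [LinearOrder G] [IsOrderedAddMonoid G] (ι : ℤ →+ G) (hι : StrictMono ι)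

local notation "W" => WittVector p k
local notation "R" => HahnSeries G (WittVector p k)

/-- the partial sum `Σ_{n=-m}^{M} f_{g+ιn} p^{n+m}` -/
def head (f : R) (g : G) (M : ℤ) (m : ℕ) : W :=
  ∑ n ∈ Finset.Icc (-(m : ℤ)) M, f.coeff (g + ι n) * (p : W) ^ (n + m).toNat

/-- `m` is a bound for the support of `f` on the coset of `g` -/
def Bnd (f : R) (g : G) (m : ℕ) : Prop := ∀ n : ℤ, n < -(m : ℤ) → f.coeff (g + ι n) = 0

/-- cleared partial sums vanish to order `M` -/
def Good (f : R) (g : G) (M : ℤ) (m : ℕ) : Prop :=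
  (p : W) ^ (M + m + 1).toNat ∣ head p k G ι f g M m

/-- membership in Poonen's ideal -/
def MemN (f : R) : Prop := ∀ g : G, ∀ M : ℤ, ∃ m : ℕ, Bnd p k G ι f g m ∧ Good p k G ι f g M m

section lemmas
variable {p k G ι}
include hι

lemma exists_bnd_set {S : Set G} (hS : S.IsPWO) (g : G) :
    ∃ m : ℕ, ∀ n : ℤ, n < -(m : ℤ) → g + ι n ∉ S := by
  by_contra hcon
  push_neg at hcon
  have key : ∀ z : ℤ, ∃ n : ℤ, n < z ∧ g + ι n ∈ S := by
    intro z
    obtain ⟨n, hn, hn2⟩ := hcon z.natAbs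
    exact ⟨n, lt_of_lt_of_le hn (by omega), hn2⟩
  let u : ℕ → ℤ := fun i => Nat.rec ((key 0).choose) (fun _ prev => (key prev).choose) i
  have hu0 : ∀ i, u (i + 1) = (key (u i)).choose := fun i => rfl
  have humem : ∀ i, g + ι (u i) ∈ S := by
    intro i
    cases i with
    | zero => exact (key 0).choose_spec.2
    | succ n => rw [hu0]; exact (key (u n)).choose_spec.2
  have hulet : ∀ i, u (i + 1) < u i := by
    intro i
    rw [hu0]
    exact (key (u i)).choose_spec.1
  have hanti : StrictAnti fun i => g + ι (u i) := by
    have : StrictAnti u := strictAnti_nat_of_succ_lt hulet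
    intro a b hab
    exact add_lt_add_right (hι (this hab)) g
  exact (Set.isWF_iff_no_descending_seq.1 hS.isWF) _ hanti fun n => humem n

lemma exists_bnd (f : R) (g : G) : ∃ m : ℕ, Bnd p k G ι f g m := by
  obtain ⟨m, hm⟩ := exists_bnd_set hι f.isPWO_support g
  exact ⟨m, fun n hn => Function.notMem_support.1 (hm n hn)⟩

lemma bnd_mono {f : R} {g : G} {m m' : ℕ} (h : Bnd p k G ι f g m) (hm : m ≤ m') :
    Bnd p k G ι f g m' := by
  intro n hn
  exact h n (by omega)

lemma head_succ {f : R} {g : G} {M : ℤ} {m : ℕ} (h : Bnd p k G ι f g m) :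
    head p k G ι f g M (m + 1) = (p : W) * head p k G ι f g M m := by
  unfold head
  have hcast : ((m + 1 : ℕ) : ℤ) = (m : ℤ) + 1 := by push_cast; ring
  rw [hcast, Finset.mul_sum]
  have hzero : ∀ n ∈ Finset.Icc (-((m : ℤ) + 1)) M, n ∉ Finset.Icc (-(m : ℤ)) M →
      f.coeff (g + ι n) * (p : W) ^ (n + ((m : ℤ) + 1)).toNat = 0 := by
    intro n hn hn2
    simp only [Finset.mem_Icc] at hn hn2
    rw [h n (by omega), zero_mul]
  rw [← Finset.sum_subset (Finset.Icc_subset_Icc_left (by omega)) hzero]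
  refine Finset.sum_congr rfl fun n hn => ?_
  simp only [Finset.mem_Icc] at hn
  rw [show (n + ((m : ℤ) + 1)).toNat = (n + m).toNat + 1 by omega, pow_succ]
  ring

lemma good_mono {f : R} {g : G} {M : ℤ} {m m' : ℕ} (hb : Bnd p k G ι f g m) (hm : m ≤ m')
    (h : Good p k G ι f g M m) : Good p k G ι f g M m' := by
  induction m' with
  | zero => simpa [Nat.le_zero.1 hm] using h
  | succ n ih =>
    rcases Nat.lt_or_ge m (n + 1) with hlt | hge
    · have hn : m ≤ n := by omega
      have hG := ih hn
      unfold Good at hG ⊢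
      rw [head_succ hι (bnd_mono hι hb hn)]
      have hle : (M + (n + 1 : ℕ) + 1).toNat ≤ (M + (n : ℕ) + 1).toNat + 1 := by
        push_cast; omega
      exact (pow_dvd_pow _ hle).trans (by rw [pow_succ']; exact mul_dvd_mul_left _ hG)
    · have : m = n + 1 := by omega
      subst this; exact h

lemma head_add_nat {f : R} {g : G} {M : ℤ} {m : ℕ} (hb : Bnd p k G ι f g m) (d : ℕ) :
    head p k G ι f g M (m + d) = (p : W) ^ d * head p k G ι f g M m := by
  induction d with
  | zero => simp
  | succ n ih =>
    rw [show m + (n + 1) = (m + n) + 1 by omega,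
      head_succ hι (bnd_mono hι hb (by omega)), ih, pow_succ]
    ring

lemma good_anti {f : R} {g : G} {M : ℤ} {m m' : ℕ} (hb : Bnd p k G ι f g m) (hm : m ≤ m')
    (h : Good p k G ι f g M m') : Good p k G ι f g M m := by
  unfold Good at h ⊢
  obtain ⟨d, rfl⟩ := Nat.exists_eq_add_of_le hm
  rw [head_add_nat hι hb d] at h
  rcases le_or_gt (M + m + 1) 0 with hn | hp
  · rw [Int.toNat_of_nonpos hn, pow_zero]
    exact one_dvd _
  · have ht : (M + (m + d : ℕ) + 1).toNat = (M + m + 1).toNat + d := by push_cast; omega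
    rw [ht, pow_add, mul_comm ((p : W) ^ (M + m + 1).toNat)] at h
    exact (mul_dvd_mul_iff_left (pow_ne_zero d (pn_nonzero p k))).1 h

lemma good_trans {f : R} {g : G} {M : ℤ} {m m' : ℕ} (hb : Bnd p k G ι f g m)
    (hb' : Bnd p k G ι f g m') (h : Good p k G ι f g M m') : Good p k G ι f g M m :=
  good_anti hι hb (le_max_left m m')
    (good_mono hι hb' (le_max_right m m') h)


omit hι in
lemma head_add (f h : R) (g : G) (M : ℤ) (m : ℕ) :
    head p k G ι (f + h) g M m = head p k G ι f g M m + head p k G ι h g M m := by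
  simp [head, HahnSeries.coeff_add, add_mul, Finset.sum_add_distrib]

omit hι in
/-- key convolution identity for heads of products -/
lemma head_mul (h f : R) (g : G) (M : ℤ) (m : ℕ) :
    ∃ A : Finset G, (∀ a ∈ A, a ∈ h.support) ∧
      head p k G ι (h * f) g M m = ∑ a ∈ A, h.coeff a * head p k G ι f (g - a) M m := by
  classical
  set A : Finset G := (Finset.Icc (-(m : ℤ)) M).biUnion
    (fun n => (Finset.addAntidiagonal h.isPWO_support f.isPWO_support (g + ι n)).image
      Prod.fst) with hA
  refine ⟨A, ?_, ?_⟩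
  · intro a ha
    rw [hA] at ha
    obtain ⟨n, _, hn⟩ := Finset.mem_biUnion.1 ha
    obtain ⟨ij, hij, rfl⟩ := Finset.mem_image.1 hn
    exact (Finset.mem_addAntidiagonal.1 hij).1
  · unfold head
    have key : ∀ n ∈ Finset.Icc (-(m : ℤ)) M,
        (h * f).coeff (g + ι n) * (p : W) ^ (n + m).toNat
          = ∑ a ∈ A, h.coeff a * (f.coeff ((g - a) + ι n) * (p : W) ^ (n + m).toNat) := by
      intro n hn
      rw [HahnSeries.coeff_mul, Finset.sum_mul]
      have himg : (Finset.addAntidiagonal h.isPWO_support f.isPWO_support (g + ι n)).image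
          Prod.fst ⊆ A := by
        rw [hA]; exact fun a ha => Finset.mem_biUnion.2 ⟨n, hn, ha⟩
      have hinj : ∀ x ∈ Finset.addAntidiagonal h.isPWO_support f.isPWO_support (g + ι n),
          ∀ y ∈ Finset.addAntidiagonal h.isPWO_support f.isPWO_support (g + ι n),
          x.1 = y.1 → x = y := by
        intro x hx y hy hxy
        obtain ⟨_, _, h3⟩ := Finset.mem_addAntidiagonal.1 hx
        obtain ⟨_, _, h3'⟩ := Finset.mem_addAntidiagonal.1 hy
        refine Prod.ext hxy ?_
        have : x.1 + x.2 = y.1 + y.2 := by rw [h3, h3']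
        rw [hxy] at this
        exact add_left_cancel this
      have hzero : ∀ a ∈ A,
          a ∉ (Finset.addAntidiagonal h.isPWO_support f.isPWO_support (g + ι n)).image
            Prod.fst →
          h.coeff a * (f.coeff ((g - a) + ι n) * (p : W) ^ (n + m).toNat) = 0 := by
        intro a _ hnot
        by_cases hha : h.coeff a = 0
        · rw [hha, zero_mul]
        by_cases hfa : f.coeff ((g - a) + ι n) = 0
        · rw [hfa, zero_mul, mul_zero]
        exact absurd (Finset.mem_image.2 ⟨(a, (g - a) + ι n),
          Finset.mem_addAntidiagonal.2 ⟨hha, hfa, by rw [← add_assoc, add_sub_cancel]⟩, rfl⟩) hnot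
      rw [← Finset.sum_subset himg hzero, Finset.sum_image hinj]
      refine Finset.sum_congr rfl fun ij hij => ?_
      obtain ⟨h1, h2, h3⟩ := Finset.mem_addAntidiagonal.1 hij
      have hj : (g - ij.1) + ι n = ij.2 := by
        have h4 : ij.2 = g + ι n - ij.1 := by rw [← h3]; abel
        rw [h4]; abel
      rw [hj]; ring
    rw [Finset.sum_congr rfl key, Finset.sum_comm]
    exact Finset.sum_congr rfl fun a _ => by rw [Finset.mul_sum]

lemma memN_zero : MemN p k G ι 0 := by
  intro g M
  exact ⟨0, fun n _ => by simp, by simp [Good, head]⟩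

lemma memN_add {f h : R} (hf : MemN p k G ι f) (hh : MemN p k G ι h) :
    MemN p k G ι (f + h) := by
  intro g M
  obtain ⟨m1, hb1, hg1⟩ := hf g M
  obtain ⟨m2, hb2, hg2⟩ := hh g M
  have e1 := le_max_left m1 m2
  have e2 := le_max_right m1 m2
  refine ⟨max m1 m2, ?_, ?_⟩
  · intro n hn
    rw [HahnSeries.coeff_add, hb1 n (by omega), hb2 n (by omega), add_zero]
  · unfold Good
    rw [head_add]
    exact dvd_add (good_mono hι hb1 e1 hg1) (good_mono hι hb2 e2 hg2)

lemma memN_mul (h : R) {f : R} (hf : MemN p k G ι f) : MemN p k G ι (h * f) := by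
  intro g M
  obtain ⟨m, hm⟩ := exists_bnd_set hι ((h.isPWO_support).add f.isPWO_support) g
  have hbnd : Bnd p k G ι (h * f) g m := by
    intro n hn
    by_contra hne
    exact hm n hn (Set.add_subset_add_left (le_refl _)
      (HahnSeries.support_mul_subset hne))
  obtain ⟨A, hAsupp, hAeq⟩ := head_mul (p := p) (k := k) (G := G) (ι := ι) h f g M m
  refine ⟨m, hbnd, ?_⟩
  unfold Good
  rw [hAeq]
  refine Finset.dvd_sum fun a ha => ?_
  have hbf : Bnd p k G ι f (g - a) m := by
    intro n hn
    by_contra hne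
    exact hm n hn ⟨a, hAsupp a ha, (g - a) + ι n, hne, by abel⟩
  obtain ⟨m2, hb2, hg2⟩ := hf (g - a) M
  exact Dvd.dvd.mul_left (good_trans hι hbf hb2 hg2) _

lemma one_not_memN : ¬ MemN p k G ι 1 := by
  intro h1
  obtain ⟨m, hb, hg⟩ := h1 0 0
  unfold Good head at hg
  have hcoeff : ∀ n : ℤ, (1 : R).coeff ((0 : G) + ι n) = if n = 0 then 1 else 0 := by
    intro n
    rw [zero_add, HahnSeries.coeff_one]
    by_cases hn : n = 0
    · simp [hn]
    · rw [if_neg hn, if_neg fun hc => hn (hι.injective (by simpa using hc))]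
  have hsum : ∑ n ∈ Finset.Icc (-(m : ℤ)) 0, (1 : R).coeff ((0 : G) + ι n)
        * (p : W) ^ (n + m).toNat = (p : W) ^ m := by
    rw [Finset.sum_eq_single 0]
    · simp [hcoeff]
    · intro n hn hn0
      rw [hcoeff, if_neg hn0, zero_mul]
    · intro h0
      exact absurd (Finset.mem_Icc.2 ⟨by omega, le_refl 0⟩) h0
  rw [hsum, show ((0 : ℤ) + m + 1).toNat = m + 1 by omega] at hg
  obtain ⟨c, hc⟩ := hg
  rw [pow_succ, mul_assoc] at hc
  have h2 : (1 : W) = (p : W) * c :=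
    mul_left_cancel₀ (pow_ne_zero m (pn_nonzero p k)) (by rw [mul_one]; exact hc)
  exact (WittVector.irreducible p).not_isUnit (IsUnit.of_mul_eq_one (a := (p : W)) c h2.symm)

end lemmas

/-- the canonical Teichmüller digit of `f` at `g` -/
def adigit (hι : StrictMono ι) (f : R) (g : G) : k :=
  digit p k (exists_bnd hι f g).choose
    (head p k G ι f g 0 (exists_bnd hι f g).choose)

section lemmas2
variable {p k G ι}
include hι

lemma digit_pow_mul (d n : ℕ) (x : W) :
    digit p k (n + d) ((p : W) ^ d * x) = digit p k n x := by
  induction d with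
  | zero => simp
  | succ i ih =>
    rw [show n + (i + 1) = (n + i) + 1 by omega, pow_succ, mul_comm ((p : W) ^ i) (p : W),
      mul_assoc, digit_p_mul, ih]

lemma digit_head_stable {f : R} {g : G} {m m' : ℕ} (hb : Bnd p k G ι f g m) (hm : m ≤ m') :
    digit p k m' (head p k G ι f g 0 m') = digit p k m (head p k G ι f g 0 m) := by
  obtain ⟨d, rfl⟩ := Nat.exists_eq_add_of_le hm
  rw [head_add_nat hι hb d, digit_pow_mul hι]

lemma adigit_spec {f : R} {g : G} {m : ℕ} (hb : Bnd p k G ι f g m) :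
    adigit p k G ι hι f g = digit p k m (head p k G ι f g 0 m) := by
  unfold adigit
  set m0 := (exists_bnd hι f g).choose with hm0
  have hb0 : Bnd p k G ι f g m0 := (exists_bnd hι f g).choose_spec
  calc digit p k m0 (head p k G ι f g 0 m0)
      = digit p k (max m m0) (head p k G ι f g 0 (max m m0)) :=
        (digit_head_stable hι hb0 (le_max_right m m0)).symm
    _ = digit p k m (head p k G ι f g 0 m) := digit_head_stable hι hb (le_max_left m m0)

omit hι in
lemma head_shift (f : R) (g : G) (M : ℤ) (m : ℕ) (s : ℤ) (hms : 0 ≤ (m : ℤ) + s) :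
    head p k G ι f g M m = head p k G ι f (g + ι s) (M - s) ((m + s).toNat) := by
  unfold head
  refine Finset.sum_nbij' (fun n => n - s) (fun n => n + s) ?_ ?_ ?_ ?_ ?_
  · intro n hn
    simp only [Finset.mem_Icc] at hn ⊢
    omega
  · intro n hn
    simp only [Finset.mem_Icc] at hn ⊢
    omega
  · intro n _; omega
  · intro n _; omega
  · intro n hn
    simp only [Finset.mem_Icc] at hn
    have hcoeff : g + ι n = (g + ι s) + ι (n - s) := by
      rw [add_assoc, ← map_add]
      congr 2
      omega
    rw [hcoeff, show (n - s + ((m : ℤ) + s).toNat) = n + m by omega]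


lemma digit_head (f : R) (g : G) (M : ℤ) (m : ℕ) (hb : Bnd p k G ι f g m) (i : ℕ)
    (hi : (i : ℤ) ≤ M + m) :
    digit p k i (head p k G ι f g M m) = adigit p k G ι hι f (g + ι ((i : ℤ) - m)) := by
  set s : ℤ := (i : ℤ) - m with hs
  have hms : (0 : ℤ) ≤ (m : ℤ) + s := by omega
  rw [head_shift f g M m s hms, show ((m : ℤ) + s).toNat = i by omega]
  have hb' : Bnd p k G ι f (g + ι s) i := by
    intro n hn
    have he : g + ι s + ι n = g + ι (s + n) := by rw [add_assoc, ← map_add]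
    rw [he]
    exact hb (s + n) (by omega)
  have hdiff : (p : W) ^ (i + 1) ∣
      head p k G ι f (g + ι s) (M - s) i - head p k G ι f (g + ι s) 0 i := by
    have hsub : Finset.Icc (-(i : ℤ)) 0 ⊆ Finset.Icc (-(i : ℤ)) (M - s) := by
      apply Finset.Icc_subset_Icc_right
      omega
    unfold head
    rw [← Finset.sum_sdiff_eq_sub hsub]
    refine Finset.dvd_sum fun n hn => ?_
    have hn' : 0 < n := by
      simp only [Finset.mem_sdiff, Finset.mem_Icc] at hn
      omega
    exact Dvd.dvd.mul_left (pow_dvd_pow _ (by omega : i + 1 ≤ (n + i).toNat)) _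
  rw [digit_congr p k i hdiff]
  exact (adigit_spec hι hb').symm

lemma adigit_support {f : R} {g : G} (hne : adigit p k G ι hι f g ≠ 0) :
    g ∈ f.support + (Set.range fun j : ℕ => ι j) := by
  unfold adigit at hne
  set m0 := (exists_bnd hι f g).choose with hm0
  have hhead : head p k G ι f g 0 m0 ≠ 0 := by
    intro h0
    rw [h0, digit_zero] at hne
    exact hne rfl
  have : ∃ n ∈ Finset.Icc (-(m0 : ℤ)) 0, f.coeff (g + ι n) ≠ 0 := by
    by_contra hall
    push_neg at hall
    exact hhead (Finset.sum_eq_zero fun n hn => by rw [hall n hn, zero_mul])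
  obtain ⟨n, hn, hne'⟩ := this
  simp only [Finset.mem_Icc] at hn
  refine ⟨g + ι n, hne', ι ((-n).toNat), ⟨(-n).toNat, rfl⟩, ?_⟩
  show (g + ι n) + ι ((-n).toNat : ℤ) = g
  rw [add_assoc, ← map_add, show n + ((-n).toNat : ℤ) = 0 by omega, map_zero, add_zero]

lemma range_isPWO : (Set.range fun j : ℕ => ι j).IsPWO := by
  refine Set.IsWF.isPWO ?_
  rw [Set.isWF_iff_no_descending_seq]
  intro u hu hmem
  have : ∀ n : ℕ, ∃ j : ℕ, u n = ι j := fun n => by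
    obtain ⟨j, hj⟩ := hmem n
    exact ⟨j, hj.symm⟩
  choose j hj using this
  have hanti : ∀ n, j (n + 1) < j n := by
    intro n
    have := hu (Nat.lt_succ_self n)
    rw [hj n, hj (n + 1)] at this
    have h2 : ((j (n + 1) : ℤ)) < (j n : ℤ) := hι.lt_iff_lt.1 this
    exact_mod_cast h2
  have hbound : ∀ n, j n + n ≤ j 0 := by
    intro n
    induction n with
    | zero => omega
    | succ i ih =>
      have := hanti i
      omega
  have := hbound (j 0 + 1)
  omega

end lemmas2

/-- the canonical form of `f` -/
def canon (hι : StrictMono ι) (f : R) : R :=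
  ⟨fun g => WittVector.teichmuller p (adigit p k G ι hι f g), by
    refine (f.isPWO_support.add (range_isPWO hι)).mono ?_
    intro g hg
    have hne : adigit p k G ι hι f g ≠ 0 := by
      intro h0
      rw [Function.mem_support, h0, WittVector.teichmuller_zero] at hg
      exact hg rfl
    exact adigit_support hι hne⟩

/-- Poonen's ideal -/
def NIdeal (hι : StrictMono ι) : Ideal R where
  carrier := {f | MemN p k G ι f}
  add_mem' := memN_add hι
  zero_mem' := memN_zero hι
  smul_mem' := fun c f hf => memN_mul hι c hf

section lemmas3
variable {p k G ι}
include hι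

lemma canon_coeff (f : R) (g : G) :
    (canon p k G ι hι f).coeff g = WittVector.teichmuller p (adigit p k G ι hι f g) := rfl

lemma bnd_canon {f : R} {g : G} {m : ℕ} (hb : Bnd p k G ι f g m) :
    Bnd p k G ι (canon p k G ι hι f) g m := by
  intro n hn
  rw [canon_coeff]
  have hb' : Bnd p k G ι f (g + ι n) 0 := by
    intro j hj
    have he : g + ι n + ι j = g + ι (n + j) := by rw [add_assoc, ← map_add]
    rw [he]
    exact hb (n + j) (by omega)
  rw [adigit_spec hι hb']
  have hhead : head p k G ι f (g + ι n) 0 0 = 0 := by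
    unfold head
    refine Finset.sum_eq_zero fun j hj => ?_
    simp only [Finset.mem_Icc] at hj
    have hj0 : j = 0 := by omega
    subst hj0
    rw [map_zero, add_zero, hb n hn, zero_mul]
  rw [hhead, digit_zero, WittVector.teichmuller_zero]

lemma memN_sub_canon (f : R) : MemN p k G ι (f - canon p k G ι hι f) := by
  intro g M
  obtain ⟨m, hbf⟩ := exists_bnd hι f g
  have hbc : Bnd p k G ι (canon p k G ι hι f) g m := bnd_canon hι hbf
  have hb : Bnd p k G ι (f - canon p k G ι hι f) g m := by
    intro n hn
    rw [HahnSeries.coeff_sub, hbf n hn, hbc n hn, sub_zero]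
  refine ⟨m, hb, ?_⟩
  unfold Good
  rcases le_or_gt (M + m + 1) 0 with hcase | hcase
  · rw [Int.toNat_of_nonpos hcase, pow_zero]
    exact one_dvd _
  have hLM : (0 : ℤ) ≤ M + m := by omega
  have hsub : head p k G ι (f - canon p k G ι hι f) g M m
      = head p k G ι f g M m - head p k G ι (canon p k G ι hι f) g M m := by
    simp [head, HahnSeries.coeff_sub, sub_mul, Finset.sum_sub_distrib]
  rw [hsub]
  have hcanon : head p k G ι (canon p k G ι hι f) g M m
      = ∑ i ∈ Finset.range ((M + m).toNat + 1),
          WittVector.teichmuller p (digit p k i (head p k G ι f g M m)) * (p : W) ^ i := by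
    unfold head
    refine Finset.sum_nbij' (fun n => (n + m).toNat) (fun i => (i : ℤ) - m) ?_ ?_ ?_ ?_ ?_
    · intro n hn
      simp only [Finset.mem_Icc, Finset.mem_range] at hn ⊢
      omega
    · intro i hi
      simp only [Finset.mem_Icc, Finset.mem_range] at hi ⊢
      omega
    · intro n hn; simp only [Finset.mem_Icc] at hn; omega
    · intro i hi; simp only [Finset.mem_range] at hi; omega
    · intro n hn
      simp only [Finset.mem_Icc] at hn
      rw [canon_coeff,
        show (∑ j ∈ Finset.Icc (-(m : ℤ)) M, f.coeff (g + ι j) * (p : W) ^ (j + m).toNat)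
          = head p k G ι f g M m from rfl,
        digit_head hι f g M m hbf ((n + m).toNat) (by omega),
        show (((n + m).toNat : ℤ) - m) = n by omega]
  rw [hcanon, show (M + m + 1).toNat = (M + m).toNat + 1 by omega]
  exact digit_expansion p k ((M + m).toNat) (head p k G ι f g M m)

lemma isUnit_canon {f : R} (hf : canon p k G ι hι f ≠ 0) : IsUnit (canon p k G ι hι f) := by
  rw [HahnSeries.isUnit_iff]
  have h2 : (canon p k G ι hι f).leadingCoeff ≠ 0 := HahnSeries.leadingCoeff_ne_zero.2 hf
  rw [HahnSeries.leadingCoeff_eq, canon_coeff] at h2 ⊢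
  refine WittVector.isUnit_of_coeff_zero_ne_zero _ ?_
  rw [WittVector.teichmuller_coeff_zero]
  intro h0
  rw [h0, WittVector.teichmuller_zero] at h2
  exact h2 rfl

lemma NIdeal_isMaximal : (NIdeal p k G ι hι : Ideal R).IsMaximal := by
  rw [Ideal.isMaximal_iff]
  constructor
  · exact one_not_memN hι
  · intro J x hIJ hxI hxJ
    have hxI' : ¬ MemN p k G ι x := hxI
    have hc : canon p k G ι hι x ≠ 0 := by
      intro h0
      apply hxI'
      have hmem := memN_sub_canon hι x
      rw [h0, sub_zero] at hmem
      exact hmem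
    obtain ⟨u, hu⟩ := isUnit_canon hι hc
    have hxc : x - canon p k G ι hι x ∈ J := hIJ (memN_sub_canon hι x)
    have hcanonJ : canon p k G ι hι x ∈ J := by
      have he : canon p k G ι hι x = x - (x - canon p k G ι hι x) := by ring
      rw [he]
      exact J.sub_mem hxJ hxc
    have hfinal : ((u⁻¹ : Rˣ) : R) * canon p k G ι hι x ∈ J := J.mul_mem_left _ hcanonJ
    rwa [← hu, Units.inv_mul] at hfinal

lemma memN_iff_leanset (f : R) :
    MemN p k G ι f ↔
      ∀ g : G, ∀ M : ℕ, ∃ m₀ : ℕ, ∀ m : ℤ, (m₀ : ℤ) ≤ m →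
        (∑ n ∈ Finset.Icc (-(m₀ : ℤ)) m,
            f.coeff (g + ι n) * (p : W) ^ (n + (m₀ : ℤ)).toNat)
          ∈ Ideal.span {(p : W) ^ (M + m₀)} := by
  constructor
  · intro hf g M
    obtain ⟨m1, hb1, hg1⟩ := hf g ((M : ℤ) - 1)
    refine ⟨max m1 M, ?_⟩
    intro m hm
    set m₀ := max m1 M with hm₀
    have hMle : M ≤ m₀ := le_max_right m1 M
    have hb0 : Bnd p k G ι f g m₀ := bnd_mono hι hb1 (le_max_left _ _)
    have hg0 : Good p k G ι f g ((M : ℤ) - 1) m₀ := good_mono hι hb1 (le_max_left _ _) hg1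
    rw [Ideal.mem_span_singleton]
    have hsplit : Finset.Icc (-(m₀ : ℤ)) m
        = Finset.Icc (-(m₀ : ℤ)) ((M : ℤ) - 1) ∪ Finset.Icc (M : ℤ) m := by
      ext n
      simp only [Finset.mem_Icc, Finset.mem_union]
      omega
    have hdisj : Disjoint (Finset.Icc (-(m₀ : ℤ)) ((M : ℤ) - 1)) (Finset.Icc (M : ℤ) m) := by
      simp only [Finset.disjoint_left, Finset.mem_Icc]
      intro a ha ha2
      omega
    rw [hsplit, Finset.sum_union hdisj]
    refine dvd_add ?_ ?_
    · have hthis := hg0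
      unfold Good head at hthis
      rwa [show ((M : ℤ) - 1 + m₀ + 1).toNat = M + m₀ by omega] at hthis
    · refine Finset.dvd_sum fun n hn => ?_
      simp only [Finset.mem_Icc] at hn
      exact Dvd.dvd.mul_left (pow_dvd_pow _ (by omega : M + m₀ ≤ (n + m₀).toNat)) _
  · intro hf g M
    obtain ⟨b, hb⟩ := exists_bnd hι f g
    obtain ⟨m₀, hm₀⟩ := hf (g - ι b) ((M + b + 1).toNat)
    refine ⟨b + m₀, bnd_mono hι hb (by omega), ?_⟩
    unfold Good
    rcases le_or_gt (M + ((b + m₀ : ℕ) : ℤ) + 1) 0 with hneg | hpos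
    · rw [Int.toNat_of_nonpos hneg, pow_zero]
      exact one_dvd _
    set m : ℤ := max (m₀ : ℤ) (M + b) with hm
    have h1 := hm₀ m (le_max_left _ _)
    rw [Ideal.mem_span_singleton] at h1
    have hPS : (∑ n ∈ Finset.Icc (-(m₀ : ℤ)) m,
          f.coeff ((g - ι b) + ι n) * (p : W) ^ (n + (m₀ : ℤ)).toNat)
        = head p k G ι f g (m - b) (b + m₀) := by
      unfold head
      refine Finset.sum_nbij' (fun n => n - b) (fun n => n + b) ?_ ?_ ?_ ?_ ?_
      · intro n hn
        simp only [Finset.mem_Icc] at hn ⊢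
        push_cast
        omega
      · intro n hn
        simp only [Finset.mem_Icc] at hn ⊢
        push_cast at hn ⊢
        omega
      · intro n _; omega
      · intro n _; omega
      · intro n hn
        have hco : (g - ι b) + ι n = g + ι (n - b) := by
          have : ι n = ι (b : ℤ) + ι (n - b) := by
            rw [← map_add]
            congr 1
            omega
          rw [this]
          abel
        rw [hco, show (n - b + ((b + m₀ : ℕ) : ℤ)).toNat = (n + (m₀ : ℤ)).toNat by
          push_cast; omega]
    rw [hPS] at h1
    have hmb : M ≤ m - b := by
      have := le_max_right (m₀ : ℤ) ((M : ℤ) + b)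
      omega
    have hsplit : Finset.Icc (-((b + m₀ : ℕ) : ℤ)) (m - b)
        = Finset.Icc (-((b + m₀ : ℕ) : ℤ)) (M : ℤ) ∪ Finset.Icc ((M : ℤ) + 1) (m - b) := by
      ext n
      simp only [Finset.mem_Icc, Finset.mem_union]
      push_cast at hpos ⊢
      omega
    have hdisj : Disjoint (Finset.Icc (-((b + m₀ : ℕ) : ℤ)) (M : ℤ))
        (Finset.Icc ((M : ℤ) + 1) (m - b)) := by
      simp only [Finset.disjoint_left, Finset.mem_Icc]
      intro a ha ha2
      omega
    have hsum : head p k G ι f g (m - b) (b + m₀)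
        = head p k G ι f g M (b + m₀)
          + ∑ n ∈ Finset.Icc ((M : ℤ) + 1) (m - b),
              f.coeff (g + ι n) * (p : W) ^ (n + ((b + m₀ : ℕ) : ℤ)).toNat := by
      unfold head
      rw [hsplit, Finset.sum_union hdisj]
    have hexp : ((M : ℤ) + ((b + m₀ : ℕ) : ℤ) + 1).toNat ≤ (M + b + 1).toNat + m₀ := by
      push_cast
      omega
    have hkey : (p : W) ^ ((M : ℤ) + ((b + m₀ : ℕ) : ℤ) + 1).toNat ∣
        head p k G ι f g (m - b) (b + m₀) := (pow_dvd_pow _ hexp).trans h1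
    have htail : (p : W) ^ ((M : ℤ) + ((b + m₀ : ℕ) : ℤ) + 1).toNat ∣
        ∑ n ∈ Finset.Icc ((M : ℤ) + 1) (m - b),
          f.coeff (g + ι n) * (p : W) ^ (n + ((b + m₀ : ℕ) : ℤ)).toNat := by
      refine Finset.dvd_sum fun n hn => ?_
      simp only [Finset.mem_Icc] at hn
      exact Dvd.dvd.mul_left (pow_dvd_pow _ (by omega)) _
    have hfin : head p k G ι f g M (b + m₀)
        = head p k G ι f g (m - b) (b + m₀)
          - ∑ n ∈ Finset.Icc ((M : ℤ) + 1) (m - b),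
              f.coeff (g + ι n) * (p : W) ^ (n + ((b + m₀ : ℕ) : ℤ)).toNat := by
      rw [hsum]
      ring
    rw [hfin]
    exact dvd_sub hkey htail

end lemmas3

end PoonenMain

/-- The ideal `𝒩` of Poonen: Hahn series `f` over `W(k)` such that for every `g ∈ G`
the `p`-adically convergent sum `Σ_{n ∈ ℤ} f_{g+n} p^n` vanishes.  The vanishing of the
`p`-adic sum is expressed by saying that, after clearing denominators by `p^{m₀}`
(with `m₀` large enough), all sufficiently long partial sums lie in arbitrarily high
powers of `(p)`. -/
theorem stmt_6 (p : ℕ) [Fact p.Prime] (k : Type*) [Field k] [CharP k p] [PerfectRing k p]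
    (G : Type*) [AddCommGroup G] [LinearOrder G] [IsOrderedAddMonoid G] (ι : ℤ →+ G) (hι : StrictMono ι) :
    ∃ I : Ideal (HahnSeries G (WittVector p k)), I.IsMaximal ∧
      (I : Set (HahnSeries G (WittVector p k))) =
        { f : HahnSeries G (WittVector p k) |
          ∀ g : G, ∀ M : ℕ, ∃ m₀ : ℕ, ∀ m : ℤ, (m₀ : ℤ) ≤ m →
            (∑ n ∈ Finset.Icc (-(m₀ : ℤ)) m,
                f.coeff (g + ι n) * (p : WittVector p k) ^ (n + (m₀ : ℤ)).toNat)
              ∈ Ideal.span {(p : WittVector p k) ^ (M + m₀)} } := by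
  refine ⟨NIdeal p k G ι hι, NIdeal_isMaximal hι, ?_⟩
  ext f
  exact memN_iff_leanset hι f
end
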